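/- arXiv:2602.01130 — 4 statements merged into one kernel-verified Lean document; each statement's English description precedes it below -/
import Mathlib

section
/- With the notation of the Drinfeld double setting above (perfect bialgebra pairing A ⊗ B → K, dual bases {a_k}, {b_k}, canonical tensor R = Σ_k a_k ⊗ b_k), the canonical tensor satisfies (Δ ⊗ Id)(R) = R₁₃R₂₃ in D ⊗ D ⊗ D, where R₁₃ and R₂₃ denote R placed in the indicated tensor factors with 1 in the remaining factor. -/
/-!
STATEMENT 1: With a perfect bialgebra pairing and dual bases {a_k}, {b_k}, the canonical tensor R = Σ a_k ⊗ b_k satisfies (Δ ⊗ Id)(R) = R₁₃R₂₃ in D ⊗ D ⊗ D.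
-/

open TensorProduct

/-- The pairing extended to the tensor product: `A ⊗ B → K`. -/
noncomputable def pairT {K A B : Type*} [CommRing K] [AddCommGroup A] [Module K A]
    [AddCommGroup B] [Module K B] (p : A →ₗ[K] Module.Dual K B) :
    A ⊗[K] B →ₗ[K] K :=
  TensorProduct.lift p

/-- `pair2 p (a₁ ⊗ a₂) (b₁ ⊗ b₂) = ⟨a₁,b₁⟩⟨a₂,b₂⟩`. -/
noncomputable def pair2 {K A B : Type*} [CommRing K] [AddCommGroup A] [Module K A]
    [AddCommGroup B] [Module K B] (p : A →ₗ[K] Module.Dual K B) :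
    A ⊗[K] A →ₗ[K] Module.Dual K (B ⊗[K] B) :=
  (TensorProduct.dualDistrib K B B) ∘ₗ (TensorProduct.map p p)

/-- `pair2' p (b₁ ⊗ b₂) (a₁ ⊗ a₂) = ⟨a₁,b₁⟩⟨a₂,b₂⟩`. -/
noncomputable def pair2' {K A B : Type*} [CommRing K] [AddCommGroup A] [Module K A]
    [AddCommGroup B] [Module K B] (p : A →ₗ[K] Module.Dual K B) :
    B ⊗[K] B →ₗ[K] Module.Dual K (A ⊗[K] A) :=
  (TensorProduct.dualDistrib K A A) ∘ₗ (TensorProduct.map p.flip p.flip)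

/-- `mulIm f g (a ⊗ b) = f a * g b` in `D`. -/
noncomputable def mulIm {K A B D : Type*} [CommRing K] [AddCommGroup A] [Module K A]
    [AddCommGroup B] [Module K B] [Ring D] [Algebra K D]
    (f : A →ₗ[K] D) (g : B →ₗ[K] D) : A ⊗[K] B →ₗ[K] D :=
  TensorProduct.lift ((LinearMap.mul K D).compl₁₂ f g)

/-- `mulImRev f g (a ⊗ b) = g b * f a` in `D`. -/
noncomputable def mulImRev {K A B D : Type*} [CommRing K] [AddCommGroup A] [Module K A]
    [AddCommGroup B] [Module K B] [Ring D] [Algebra K D]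
    (f : A →ₗ[K] D) (g : B →ₗ[K] D) : A ⊗[K] B →ₗ[K] D :=
  TensorProduct.lift (((LinearMap.mul K D).compl₁₂ g f).flip)

/-- Left-hand side of the Drinfeld double cross relation, as a linear map on
`(A ⊗ B) ⊗ (A ⊗ B)`:  `(a₁ ⊗ b₁) ⊗ (a₂ ⊗ b₂) ↦ (ιA a₁ * ιB b₁) * algebraMap ⟨a₂,b₂⟩`,
i.e. `a₁b₁⟨a₂,b₂⟩`. -/
noncomputable def crossLHS {K A B D : Type*} [CommRing K] [AddCommGroup A] [Module K A]
    [AddCommGroup B] [Module K B] [Ring D] [Algebra K D]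
    (p : A →ₗ[K] Module.Dual K B) (f : A →ₗ[K] D) (g : B →ₗ[K] D) :
    (A ⊗[K] B) ⊗[K] (A ⊗[K] B) →ₗ[K] D :=
  (LinearMap.mul' K D) ∘ₗ
    (TensorProduct.map (mulIm f g) ((Algebra.linearMap K D) ∘ₗ pairT p))

/-- Right-hand side of the Drinfeld double cross relation:
`(a₁ ⊗ b₁) ⊗ (a₂ ⊗ b₂) ↦ ⟨a₁,b₁⟩ b₂a₂`. -/
noncomputable def crossRHS {K A B D : Type*} [CommRing K] [AddCommGroup A] [Module K A]
    [AddCommGroup B] [Module K B] [Ring D] [Algebra K D]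
    (p : A →ₗ[K] Module.Dual K B) (f : A →ₗ[K] D) (g : B →ₗ[K] D) :
    (A ⊗[K] B) ⊗[K] (A ⊗[K] B) →ₗ[K] D :=
  (LinearMap.mul' K D) ∘ₗ
    (TensorProduct.map ((Algebra.linearMap K D) ∘ₗ pairT p) (mulImRev f g))

/-- Expansion of an element of `A ⊗ A` in terms of the dual bases. -/
lemma expand_pair2 {K A B : Type*} [Field K] [AddCommGroup A] [Module K A]
    [AddCommGroup B] [Module K B] (p : A →ₗ[K] Module.Dual K B)
    {ι : Type*} [Fintype ι] (aB : ι → A) (bB : ι → B)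
    (hdual1 : ∀ a : A, ∑ k, p a (bB k) • aB k = a) (x : A ⊗[K] A) :
    ∑ i, ∑ j, pair2 p x (bB i ⊗ₜ[K] bB j) • (aB i ⊗ₜ[K] aB j) = x := by
  induction x using TensorProduct.induction_on with
  | zero => simp
  | tmul a a' =>
    have : ∀ i j, pair2 p (a ⊗ₜ[K] a') (bB i ⊗ₜ[K] bB j)
        = p a (bB i) * p a' (bB j) := by
      intro i j
      simp [pair2, TensorProduct.dualDistrib_apply]
    simp only [this]
    have h : ∀ (c d : K) (x y : A),
        (c • x) ⊗ₜ[K] (d • y) = (c * d) • (x ⊗ₜ[K] y) := by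
      intro c d x y
      rw [TensorProduct.smul_tmul, smul_smul, TensorProduct.tmul_smul]
    conv_rhs => rw [← hdual1 a, ← hdual1 a']
    rw [TensorProduct.sum_tmul]
    refine Finset.sum_congr rfl fun i _ => ?_
    rw [TensorProduct.tmul_sum]
    exact Finset.sum_congr rfl fun j _ => (h _ _ _ _).symm
  | add x y hx hy =>
    simp only [map_add, LinearMap.add_apply, add_smul, Finset.sum_add_distrib,
      hx, hy]

theorem canonical_tensor_delta_R13_R23
    {K A B D : Type*} [Field K] [Ring A] [Ring B] [Ring D]
    [Bialgebra K A] [Bialgebra K B] [Algebra K D]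
    (ιA : A →ₐ[K] D) (ιB : B →ₐ[K] D)
    (p : A →ₗ[K] Module.Dual K B)
    -- bialgebra pairing axiom: ⟨a, b'b''⟩ = ⟨a₁,b'⟩⟨a₂,b''⟩
    (hpair1 : ∀ (a : A) (b b' : B),
      p a (b * b') = pair2 p (Coalgebra.comul (R := K) a) (b ⊗ₜ[K] b'))
    -- bialgebra pairing axiom: ⟨a'a'', b⟩ = ⟨a',b₂⟩⟨a'',b₁⟩
    (hpair2 : ∀ (a a' : A) (b : B),
      p (a * a') b = pair2' p (Coalgebra.comul (R := K) b) (a' ⊗ₜ[K] a))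
    -- the coproduct of the Drinfeld double D
    (ΔD : D →ₗ[K] D ⊗[K] D)
    (hΔmul : ∀ x y' : D, ΔD (x * y') = ΔD x * ΔD y')
    (hΔA : ∀ a : A, ΔD (ιA a) =
      TensorProduct.map ιA.toLinearMap ιA.toLinearMap (Coalgebra.comul (R := K) a))
    (hΔB : ∀ b : B, ΔD (ιB b) =
      TensorProduct.map ιB.toLinearMap ιB.toLinearMap (Coalgebra.comul (R := K) b))
    -- the Drinfeld double cross relation a₁b₁⟨a₂,b₂⟩ = ⟨a₁,b₁⟩b₂a₂
    (hcross : ∀ (a : A) (b : B),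
      crossLHS p ιA.toLinearMap ιB.toLinearMap
          (TensorProduct.tensorTensorTensorComm K A A B B
            ((Coalgebra.comul (R := K) a) ⊗ₜ[K] (Coalgebra.comul (R := K) b)))
        = crossRHS p ιA.toLinearMap ιB.toLinearMap
          (TensorProduct.tensorTensorTensorComm K A A B B
            ((Coalgebra.comul (R := K) a) ⊗ₜ[K] (Coalgebra.comul (R := K) b))))
    -- D = A ⊗ B as a vector space: D is spanned by the products a·b
    (hspan : Submodule.span K {d : D | ∃ (a : A) (b : B), d = ιA a * ιB b} = ⊤)
    -- dual bases with respect to the (perfect) pairing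
    {ι : Type*} [Fintype ι] (aB : ι → A) (bB : ι → B)
    (hdual1 : ∀ a : A, ∑ k, p a (bB k) • aB k = a)
    (hdual2 : ∀ b : B, ∑ k, p (aB k) b • bB k = b) :
    TensorProduct.map ΔD (LinearMap.id (R := K) (M := D))
        (∑ k, ιA (aB k) ⊗ₜ[K] ιB (bB k))
      = (∑ k, (ιA (aB k) ⊗ₜ[K] (1 : D)) ⊗ₜ[K] ιB (bB k))
        * (∑ k, ((1 : D) ⊗ₜ[K] ιA (aB k)) ⊗ₜ[K] ιB (bB k)) := by
  -- Simplify the right-hand side to a double sum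
  rw [Finset.sum_mul_sum]
  have hRHS : ∀ i j : ι,
      ((ιA (aB i) ⊗ₜ[K] (1 : D)) ⊗ₜ[K] ιB (bB i))
        * (((1 : D) ⊗ₜ[K] ιA (aB j)) ⊗ₜ[K] ιB (bB j))
      = (ιA (aB i) ⊗ₜ[K] ιA (aB j)) ⊗ₜ[K] (ιB (bB i) * ιB (bB j)) := by
    intro i j
    simp [Algebra.TensorProduct.tmul_mul_tmul]
  simp only [hRHS]
  -- Simplify the left-hand side
  rw [map_sum]
  simp only [TensorProduct.map_tmul, LinearMap.id_coe, id_eq, hΔA]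
  -- expand comul (aB k) via the dual bases
  have hexp : ∀ k : ι,
      (TensorProduct.map ιA.toLinearMap ιA.toLinearMap
        (Coalgebra.comul (R := K) (aB k))) ⊗ₜ[K] ιB (bB k)
      = ∑ i, ∑ j, (p (aB k) (bB i * bB j)) •
          ((ιA (aB i) ⊗ₜ[K] ιA (aB j)) ⊗ₜ[K] ιB (bB k)) := by
    intro k
    conv_lhs => rw [← expand_pair2 p aB bB hdual1 (Coalgebra.comul (R := K) (aB k))]
    rw [map_sum, TensorProduct.sum_tmul]
    refine Finset.sum_congr rfl fun i _ => ?_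
    rw [map_sum, TensorProduct.sum_tmul]
    refine Finset.sum_congr rfl fun j _ => ?_
    rw [hpair1, LinearMap.map_smul, TensorProduct.smul_tmul', TensorProduct.map_tmul]
    rfl
  simp only [hexp]
  rw [Finset.sum_comm]
  refine Finset.sum_congr rfl fun i _ => ?_
  rw [Finset.sum_comm]
  refine Finset.sum_congr rfl fun j _ => ?_
  calc ∑ k, p (aB k) (bB i * bB j) •
        ((ιA (aB i) ⊗ₜ[K] ιA (aB j)) ⊗ₜ[K] ιB (bB k))
      = (ιA (aB i) ⊗ₜ[K] ιA (aB j)) ⊗ₜ[K]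
          (∑ k, p (aB k) (bB i * bB j) • ιB (bB k)) := by
        rw [TensorProduct.tmul_sum]
        exact Finset.sum_congr rfl fun k _ => (TensorProduct.tmul_smul _ _ _).symm
    _ = (ιA (aB i) ⊗ₜ[K] ιA (aB j)) ⊗ₜ[K] (ιB (bB i) * ιB (bB j)) := by
        congr 1
        conv_rhs => rw [← map_mul, ← hdual2 (bB i * bB j), map_sum]
        simp
end

section
/- With the notation of the Drinfeld double setting above (perfect bialgebra pairing A ⊗ B → K, dual bases {a_k}, {b_k}, canonical tensor R = Σ_k a_k ⊗ b_k), the canonical tensor satisfies (Id ⊗ Δ)(R) = R₁₃R₁₂ in D ⊗ D ⊗ D. -/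
/-!
STATEMENT 2: With a perfect bialgebra pairing and dual bases {a_k}, {b_k}, the canonical tensor R = Σ a_k ⊗ b_k satisfies (Id ⊗ Δ)(R) = R₁₃R₁₂ in D ⊗ D ⊗ D.
-/

open TensorProduct

theorem canonical_tensor_delta_R13_R12
    {K A B D : Type*} [Field K] [Ring A] [Ring B] [Ring D]
    [Bialgebra K A] [Bialgebra K B] [Algebra K D]
    (ιA : A →ₐ[K] D) (ιB : B →ₐ[K] D)
    (p : A →ₗ[K] Module.Dual K B)
    -- bialgebra pairing axiom: ⟨a, b'b''⟩ = ⟨a₁,b'⟩⟨a₂,b''⟩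
    (hpair1 : ∀ (a : A) (b b' : B),
      p a (b * b') = pair2 p (Coalgebra.comul (R := K) a) (b ⊗ₜ[K] b'))
    -- bialgebra pairing axiom: ⟨a'a'', b⟩ = ⟨a',b₂⟩⟨a'',b₁⟩
    (hpair2 : ∀ (a a' : A) (b : B),
      p (a * a') b = pair2' p (Coalgebra.comul (R := K) b) (a' ⊗ₜ[K] a))
    -- the coproduct of the Drinfeld double D
    (ΔD : D →ₗ[K] D ⊗[K] D)
    (hΔmul : ∀ x y' : D, ΔD (x * y') = ΔD x * ΔD y')
    (hΔA : ∀ a : A, ΔD (ιA a) =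
      TensorProduct.map ιA.toLinearMap ιA.toLinearMap (Coalgebra.comul (R := K) a))
    (hΔB : ∀ b : B, ΔD (ιB b) =
      TensorProduct.map ιB.toLinearMap ιB.toLinearMap (Coalgebra.comul (R := K) b))
    -- the Drinfeld double cross relation a₁b₁⟨a₂,b₂⟩ = ⟨a₁,b₁⟩b₂a₂
    (hcross : ∀ (a : A) (b : B),
      crossLHS p ιA.toLinearMap ιB.toLinearMap
          (TensorProduct.tensorTensorTensorComm K A A B B
            ((Coalgebra.comul (R := K) a) ⊗ₜ[K] (Coalgebra.comul (R := K) b)))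
        = crossRHS p ιA.toLinearMap ιB.toLinearMap
          (TensorProduct.tensorTensorTensorComm K A A B B
            ((Coalgebra.comul (R := K) a) ⊗ₜ[K] (Coalgebra.comul (R := K) b))))
    -- D = A ⊗ B as a vector space: D is spanned by the products a·b
    (hspan : Submodule.span K {d : D | ∃ (a : A) (b : B), d = ιA a * ιB b} = ⊤)
    -- dual bases with respect to the (perfect) pairing
    {ι : Type*} [Fintype ι] (aB : ι → A) (bB : ι → B)
    (hdual1 : ∀ a : A, ∑ k, p a (bB k) • aB k = a)
    (hdual2 : ∀ b : B, ∑ k, p (aB k) b • bB k = b) :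
    TensorProduct.map (LinearMap.id (R := K) (M := D)) ΔD
        (∑ k, ιA (aB k) ⊗ₜ[K] ιB (bB k))
      = (∑ k, ιA (aB k) ⊗ₜ[K] ((1 : D) ⊗ₜ[K] ιB (bB k)))
        * (∑ k, ιA (aB k) ⊗ₜ[K] (ιB (bB k) ⊗ₜ[K] (1 : D))) := by
  classical
  -- Key expansion of the coproduct of b in terms of the dual bases.
  have key : ∀ b : B, (Coalgebra.comul (R := K) b : B ⊗[K] B)
      = ∑ j, ∑ j', p (aB j' * aB j) b • (bB j ⊗ₜ[K] bB j') := by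
    intro b
    have h2 : ∀ j j' : ι, p (aB j' * aB j) b
        = pair2' p (Coalgebra.comul (R := K) b) (aB j ⊗ₜ[K] aB j') :=
      fun j j' => hpair2 (aB j') (aB j) b
    simp_rw [h2]
    generalize (Coalgebra.comul (R := K) b : B ⊗[K] B) = t
    induction t using TensorProduct.induction_on with
    | zero => simp
    | tmul b' b'' =>
      have hp : ∀ j j' : ι, pair2' p (b' ⊗ₜ[K] b'') (aB j ⊗ₜ[K] aB j')
          = p (aB j) b' * p (aB j') b'' := by
        intro j j'
        simp [pair2', TensorProduct.dualDistrib_apply]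
      symm
      calc ∑ j, ∑ j', pair2' p (b' ⊗ₜ[K] b'') (aB j ⊗ₜ[K] aB j') • (bB j ⊗ₜ[K] bB j')
          = ∑ j, ∑ j', (p (aB j) b' • bB j) ⊗ₜ[K] (p (aB j') b'' • bB j') := by
            refine Finset.sum_congr rfl fun j _ => Finset.sum_congr rfl fun j' _ => ?_
            rw [hp, ← TensorProduct.smul_tmul_smul]
        _ = (∑ j, p (aB j) b' • bB j) ⊗ₜ[K] (∑ j', p (aB j') b'' • bB j') := by
            rw [TensorProduct.sum_tmul]
            exact Finset.sum_congr rfl fun j _ => (TensorProduct.tmul_sum _ _ _).symm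
        _ = b' ⊗ₜ[K] b'' := by rw [hdual2, hdual2]
    | add x y hx hy =>
      simp only [map_add, LinearMap.add_apply, add_smul, Finset.sum_add_distrib]
      rw [← hx, ← hy]
  -- Compute the left-hand side.
  have LHS_eq : TensorProduct.map (LinearMap.id (R := K) (M := D)) ΔD
        (∑ k, ιA (aB k) ⊗ₜ[K] ιB (bB k))
      = ∑ j, ∑ j', (ιA (aB j') * ιA (aB j)) ⊗ₜ[K] (ιB (bB j) ⊗ₜ[K] ιB (bB j')) := by
    rw [map_sum]
    simp_rw [TensorProduct.map_tmul, LinearMap.id_apply]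
    have step : ∀ k : ι, ιA (aB k) ⊗ₜ[K] ΔD (ιB (bB k))
        = ∑ j, ∑ j', p (aB j' * aB j) (bB k) •
            (ιA (aB k) ⊗ₜ[K] (ιB (bB j) ⊗ₜ[K] ιB (bB j'))) := by
      intro k
      rw [hΔB, key (bB k)]
      rw [map_sum, TensorProduct.tmul_sum]
      refine Finset.sum_congr rfl fun j _ => ?_
      rw [map_sum, TensorProduct.tmul_sum]
      refine Finset.sum_congr rfl fun j' _ => ?_
      rw [map_smul, TensorProduct.map_tmul, TensorProduct.tmul_smul]
      rfl
    simp_rw [step]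
    rw [Finset.sum_comm]
    refine Finset.sum_congr rfl fun j _ => ?_
    rw [Finset.sum_comm]
    refine Finset.sum_congr rfl fun j' _ => ?_
    have : ∑ k, p (aB j' * aB j) (bB k) •
        (ιA (aB k) ⊗ₜ[K] (ιB (bB j) ⊗ₜ[K] ιB (bB j')))
        = (∑ k, p (aB j' * aB j) (bB k) • ιA (aB k)) ⊗ₜ[K]
            (ιB (bB j) ⊗ₜ[K] ιB (bB j')) := by
      rw [TensorProduct.sum_tmul]
      exact Finset.sum_congr rfl fun k _ => by rw [TensorProduct.smul_tmul']
    rw [this]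
    have : (∑ k, p (aB j' * aB j) (bB k) • ιA (aB k)) = ιA (aB j') * ιA (aB j) := by
      rw [← map_mul]
      conv_rhs => rw [← hdual1 (aB j' * aB j)]
      rw [map_sum]
      exact Finset.sum_congr rfl fun k _ => by rw [map_smul]
    rw [this]
  rw [LHS_eq, Finset.sum_mul_sum, Finset.sum_comm]
  refine Finset.sum_congr rfl fun j' _ => Finset.sum_congr rfl fun j _ => ?_
  rw [Algebra.TensorProduct.tmul_mul_tmul, Algebra.TensorProduct.tmul_mul_tmul,
    one_mul, mul_one]
end

section
/- Let K be a field, V a K-vector space with a decomposition V = ⊕_ψ V_ψ indexed by loop weights ψ (I-tuples of formal power series), and suppose operators φ⁺_i(z) act on a tensor product V ⊗ W of two such graded spaces in block upper-triangular form with respect to a partial order on weights, with diagonal blocks acting as φ⁺_i(z) ⊗ φ⁺_i(z). Then the q-character of V ⊗ W (the formal sum Σ_ψ dim(V⊗W)_ψ [ψ] over generalized eigenspaces) equals the product χ_q(V)·χ_q(W) under the multiplication [ψ][ψ'] = [ψψ'] of formal symbols. -/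
/-!
STATEMENT 11 (abstract Proposition 4.3): Let `V = ⊕_ψ V_ψ`, `W = ⊕_ψ W_ψ` be
decompositions indexed by loop weights `ψ ∈ Ψ := I → (PowerSeries K)ˣ`
(I-tuples of invertible power series), with finite supports `SV, SW` and
finite-dimensional pieces.  Suppose the commuting operators `T i d`
(the coefficients of `φ⁺_i(z)`) act on `V ⊗ W` in block upper-triangular form
with respect to a strict partial order `r` on loop weights, with diagonal
blocks `V_ψ ⊗ W_ψ'` acting through the scalar `(ψψ')_{i,d}` (the action of
`φ⁺_i(z) ⊗ φ⁺_i(z)`).  Then the q-character of `V ⊗ W` is the product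
`χ_q(V)·χ_q(W)`: for each loop weight `χ`, the dimension of the joint
generalized eigenspace of the family `T` with eigenvalues `χ_{i,d}` equals
`Σ_{ψψ'=χ} dim V_ψ · dim W_{ψ'}`.
-/

open TensorProduct

/-- Generalized eigenspace of an endomorphism. -/
noncomputable def genEig {K M : Type*} [Field K] [AddCommGroup M] [Module K M]
    (f : Module.End K M) (c : K) : Submodule K M :=
  ⨆ N : ℕ, LinearMap.ker ((f - c • (1 : Module.End K M)) ^ N)

section Aux

variable {K M : Type*} [Field K] [AddCommGroup M] [Module K M]

lemma genEig_eq_genEigenspace (f : Module.End K M) (c : K) :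
    genEig f c = f.genEigenspace c ⊤ := by
  rw [Module.End.genEigenspace_top]
  exact iSup_congr fun N => (Module.End.genEigenspace_nat).symm

lemma mem_genEig {f : Module.End K M} {c : K} {x : M} :
    x ∈ genEig f c ↔ ∃ n : ℕ, ((f - c • (1 : Module.End K M)) ^ n) x = 0 := by
  rw [genEig_eq_genEigenspace, Module.End.mem_genEigenspace_top]
  simp [LinearMap.mem_ker]

lemma genEig_mapsTo {f g : Module.End K M} (h : Commute f g) (c : K) :
    ∀ x ∈ genEig f c, g x ∈ genEig f c := by
  intro x hx
  rw [genEig_eq_genEigenspace] at hx ⊢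
  exact Module.End.mapsTo_genEigenspace_of_comm h c ⊤ hx

lemma exists_no_succ {ι : Type*} (r : ι → ι → Prop) (htrans : Transitive r)
    (hirr : Irreflexive r) (s : Finset ι) :
    s.Nonempty → ∃ p ∈ s, ∀ q ∈ s, ¬ r p q := by
  classical
  induction s using Finset.strongInduction with
  | _ s ih =>
    rintro ⟨p0, hp0⟩
    by_cases h : ∀ q ∈ s, ¬ r p0 q
    · exact ⟨p0, hp0, h⟩
    · push_neg at h
      obtain ⟨q0, hq0, hr0⟩ := h
      have hsub : s.filter (fun x => r p0 x) ⊂ s := by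
        refine Finset.filter_ssubset.mpr ⟨p0, hp0, hirr p0⟩
      obtain ⟨p, hp, hmax⟩ := ih _ hsub ⟨q0, Finset.mem_filter.mpr ⟨hq0, hr0⟩⟩
      obtain ⟨hps, hp0p⟩ := Finset.mem_filter.mp hp
      refine ⟨p, hps, fun q hq hpq => ?_⟩
      exact hmax q (Finset.mem_filter.mpr ⟨hq, htrans hp0p hpq⟩) hpq

lemma finrank_biSup_le {ι : Type*} [DecidableEq ι] [FiniteDimensional K M]
    (s : Finset ι) (U : ι → Submodule K M) :
    Module.finrank K ↥(⨆ q ∈ s, U q) ≤ ∑ q ∈ s, Module.finrank K ↥(U q) := by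
  induction s using Finset.induction with
  | empty => simp
  | insert a s h ih =>
    rw [Finset.iSup_insert, Finset.sum_insert h]
    exact le_trans (Submodule.finrank_add_le_finrank_add_finrank _ _)
      (Nat.add_le_add_left ih _)

end Aux

section Core

variable {K M A ι : Type*} [Field K] [AddCommGroup M] [Module K M] [FiniteDimensional K M]
  [DecidableEq ι] [DecidableEq (A → K)]

lemma core (T : A → Module.End K M) (hcomm : ∀ a b, Commute (T a) (T b))
    (r : ι → ι → Prop) (htrans : Transitive r) (hirr : Irreflexive r)
    (c : ι → A → K) (U : ι → Submodule K M) (f : A → K)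
    (P : Finset ι)
    (htop : (⨆ p ∈ P, U p) = ⊤)
    (hdim : Module.finrank K M = ∑ p ∈ P, Module.finrank K ↥(U p))
    (htri : ∀ p ∈ P, ∀ a, ∀ x ∈ U p,
      T a x - c p a • x ∈ ⨆ q ∈ P, ⨆ _ : r q p, U q) :
    Module.finrank K ↥(⨅ a, genEig (T a) (f a))
      = ∑ p ∈ P.filter (fun p => c p = f), Module.finrank K ↥(U p) := by
  set E := ⨅ a, genEig (T a) (f a) with hE
  -- rank additivity on all subsets of P
  have hrank : ∀ Q ⊆ P, Module.finrank K ↥(⨆ q ∈ Q, U q) = ∑ q ∈ Q, Module.finrank K ↥(U q) := by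
    intro Q hQ
    have h1 := finrank_biSup_le (K := K) Q U
    have h2 := finrank_biSup_le (K := K) (P \ Q) U
    have hsup : ((⨆ q ∈ Q, U q) ⊔ ⨆ q ∈ P \ Q, U q) = ⊤ := by
      rw [← Finset.iSup_union, Finset.union_sdiff_of_subset hQ, htop]
    have h3 : Module.finrank K M ≤
        Module.finrank K ↥(⨆ q ∈ Q, U q) + Module.finrank K ↥(⨆ q ∈ P \ Q, U q) := by
      calc Module.finrank K M = Module.finrank K ↥(⊤ : Submodule K M) :=
            (finrank_top K M).symm
        _ = Module.finrank K ↥((⨆ q ∈ Q, U q) ⊔ ⨆ q ∈ P \ Q, U q) := by rw [hsup]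
        _ ≤ _ := Submodule.finrank_add_le_finrank_add_finrank _ _
    have h4 : ∑ q ∈ P \ Q, Module.finrank K ↥(U q) + ∑ q ∈ Q, Module.finrank K ↥(U q)
        = ∑ q ∈ P, Module.finrank K ↥(U q) := Finset.sum_sdiff hQ
    omega
  -- invariance of closed sups
  have hinv : ∀ Q : Finset ι, Q ⊆ P → (∀ q ∈ Q, ∀ q' ∈ P, r q' q → q' ∈ Q) →
      ∀ a, ∀ x ∈ (⨆ q ∈ Q, U q), T a x ∈ (⨆ q ∈ Q, U q) := by
    intro Q hQP hQcl a x hx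
    have hmap : Submodule.map (T a) (⨆ q ∈ Q, U q) ≤ ⨆ q ∈ Q, U q := by
      rw [Submodule.map_iSup]
      refine iSup_le fun q => ?_
      rw [Submodule.map_iSup]
      refine iSup_le fun hq => ?_
      rintro _ ⟨y, hy, rfl⟩
      have h1 := htri q (hQP hq) a y hy
      have herr : (⨆ q' ∈ P, ⨆ _ : r q' q, U q') ≤ ⨆ q ∈ Q, U q := by
        refine iSup₂_le fun q' hq' => iSup_le fun hr => ?_
        exact le_iSup₂ (f := fun q (_ : q ∈ Q) => U q) q' (hQcl q hq q' hq' hr)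
      have h2 : c q a • y ∈ ⨆ q ∈ Q, U q :=
        Submodule.smul_mem _ _ (le_iSup₂ (f := fun q (_ : q ∈ Q) => U q) q hq hy)
      have := add_mem (herr h1) h2
      simpa using this
    exact hmap ⟨x, hx, rfl⟩
  -- the main induction
  have key : ∀ Q : Finset ι, Q ⊆ P → (∀ q ∈ Q, ∀ q' ∈ P, r q' q → q' ∈ Q) →
      Module.finrank K ↥((⨆ q ∈ Q, U q) ⊓ E)
        = ∑ q ∈ Q.filter (fun q => c q = f), Module.finrank K ↥(U q) := by
    intro Q
    induction Q using Finset.strongInduction with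
    | _ Q ih =>
      intro hQP hQcl
      rcases Q.eq_empty_or_nonempty with rfl | hne
      · simp
      obtain ⟨p, hpQ, hpmax⟩ := exists_no_succ r htrans hirr Q hne
      set Q' := Q.erase p with hQ'
      set NQ := ⨆ q ∈ Q, U q with hNQ
      set NQ' := ⨆ q ∈ Q', U q with hNQ'
      have hQ'P : Q' ⊆ P := (Finset.erase_subset _ _).trans hQP
      have hQ'cl : ∀ q ∈ Q', ∀ q' ∈ P, r q' q → q' ∈ Q' := by
        intro q hq q' hq' hr
        have hqQ := Finset.mem_of_mem_erase hq
        refine Finset.mem_erase.mpr ⟨?_, hQcl q hqQ q' hq' hr⟩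
        rintro rfl
        exact hpmax q hqQ hr
      have hNQ'le : NQ' ≤ NQ := by
        refine iSup₂_le fun q hq => ?_
        exact le_iSup₂ (f := fun q (_ : q ∈ Q) => U q) q (Finset.mem_of_mem_erase hq)
      -- triangularity relative to p
      have htriQ : ∀ a, ∀ x ∈ NQ, T a x - c p a • x ∈ NQ' := by
        intro a x hx
        have hmap : Submodule.map (T a - c p a • 1) NQ ≤ NQ' := by
          rw [hNQ, Submodule.map_iSup]
          refine iSup_le fun q => ?_
          rw [Submodule.map_iSup]
          refine iSup_le fun hq => ?_
          rintro _ ⟨y, hy, rfl⟩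
          have h1 := htri q (hQP hq) a y hy
          have herr : (⨆ q' ∈ P, ⨆ _ : r q' q, U q') ≤ NQ' := by
            refine iSup₂_le fun q' hq' => iSup_le fun hr => ?_
            refine le_iSup₂ (f := fun q (_ : q ∈ Q') => U q) q' ?_
            refine Finset.mem_erase.mpr ⟨?_, hQcl q hq q' hq' hr⟩
            rintro rfl
            exact hpmax q hq hr
          have heq : (T a - c p a • 1) y = (T a y - c q a • y) + (c q a - c p a) • y := by
            simp only [LinearMap.sub_apply, LinearMap.smul_apply, Module.End.one_apply, sub_smul]
            abel
          rw [heq]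
          refine add_mem (herr h1) ?_
          by_cases hqp : q = p
          · subst hqp; simp
          · exact Submodule.smul_mem _ _
              (le_iSup₂ (f := fun q (_ : q ∈ Q') => U q) q (Finset.mem_erase.mpr ⟨hqp, hq⟩) hy)
        have := hmap ⟨x, hx, rfl⟩
        simpa using this
      have hQ'ss : Q' ⊂ Q := Finset.erase_ssubset hpQ
      by_cases hcf : c p = f
      · -- p contributes
        -- Fitting / finite family argument : NQ ≤ (NQ ⊓ E) ⊔ NQ'
        have hNQinv := hinv Q hQP hQcl
        set DF : List A → Submodule K M :=
          fun F => F.foldr (fun b S => genEig (T b) (f b) ⊓ S) NQ with hDF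
        have hDFle : ∀ F, DF F ≤ NQ := by
          intro F; induction F with
          | nil => exact le_rfl
          | cons b F ihF => exact inf_le_right.trans ihF
        have hDFE : ∀ F b, b ∈ F → DF F ≤ genEig (T b) (f b) := by
          intro F; induction F with
          | nil => intro b hb; cases hb
          | cons b' F ihF =>
            intro b hb
            rcases List.mem_cons.mp hb with rfl | hb
            · exact inf_le_left
            · exact inf_le_right.trans (ihF b hb)
        have hDFinv : ∀ F b, ∀ x ∈ DF F, T b x ∈ DF F := by
          intro F; induction F with
          | nil => exact fun b x hx => hNQinv b x hx
          | cons b' F ihF =>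
            rintro b x ⟨hx1, hx2⟩
            exact ⟨genEig_mapsTo (hcomm b' b) _ x hx1, ihF b x hx2⟩
        have claim1 : ∀ F, NQ ≤ DF F ⊔ NQ' := by
          intro F; induction F with
          | nil => exact le_sup_left
          | cons b F ihF =>
            set D := DF F with hD
            have hstep : D ≤ (genEig (T b) (f b) ⊓ D) ⊔ NQ' := by
              have hsub : ∀ x ∈ D, (T b - f b • (1 : Module.End K M)) x ∈ D := by
                intro x hx
                have h1 : T b x - f b • x ∈ D :=
                  sub_mem (hDFinv F b x hx) (Submodule.smul_mem _ _ hx)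
                simpa using h1
              set φ : Module.End K ↥D := (T b - f b • (1 : Module.End K M)).restrict hsub with hφ
              obtain ⟨n, hn⟩ := Filter.eventually_atTop.mp
                (LinearMap.eventually_codisjoint_ker_pow_range_pow φ)
              have hco := hn (n + 1) (Nat.le_succ n)
              have hsupD : (LinearMap.ker (φ ^ (n+1)) ⊔ LinearMap.range (φ ^ (n+1))) = ⊤ :=
                codisjoint_iff.mp hco
              intro x hx
              have hxD : (⟨x, hx⟩ : ↥D) ∈
                  (LinearMap.ker (φ ^ (n+1)) ⊔ LinearMap.range (φ ^ (n+1))) := by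
                rw [hsupD]; trivial
              obtain ⟨k, hk, rr, hrr, hkr⟩ := Submodule.mem_sup.mp hxD
              have hkx : (k : M) ∈ genEig (T b) (f b) ⊓ D := by
                refine ⟨mem_genEig.mpr ⟨n+1, ?_⟩, k.2⟩
                have hk0 : (φ ^ (n+1)) k = 0 := LinearMap.mem_ker.mp hk
                have h2 : ((φ ^ (n+1)) k : M)
                    = ((T b - f b • (1 : Module.End K M)) ^ (n+1)) (k : M) := by
                  rw [hφ, Module.End.pow_restrict]
                  exact LinearMap.restrict_coe_apply _ _ _
                rw [← h2, hk0, Submodule.coe_zero]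
              have hrx : (rr : M) ∈ NQ' := by
                obtain ⟨y, hy⟩ := hrr
                have h1 : rr = φ ((φ ^ n) y) := by
                  rw [← hy, ← Module.End.mul_apply, ← pow_succ']
                have h2 : (rr : M)
                    = (T b - f b • (1 : Module.End K M)) (((φ ^ n) y : ↥D) : M) := by
                  rw [h1, hφ]
                  exact LinearMap.restrict_coe_apply _ _ _
                have hz : (((φ ^ n) y : ↥D) : M) ∈ NQ := hDFle F ((φ ^ n) y).2
                have h3 := htriQ b _ hz
                rw [congrFun hcf b] at h3
                have h4 : (rr : M) = T b (((φ ^ n) y : ↥D) : M)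
                    - f b • (((φ ^ n) y : ↥D) : M) := by
                  rw [h2]
                  simp [LinearMap.sub_apply]
                rw [h4]
                exact h3
              have hxeq : x = (k : M) + (rr : M) := by
                have := congrArg (Subtype.val) hkr
                simpa using this.symm
              rw [hxeq]
              exact Submodule.add_mem_sup hkx hrx
            calc NQ ≤ DF F ⊔ NQ' := ihF
              _ ≤ ((genEig (T b) (f b) ⊓ DF F) ⊔ NQ') ⊔ NQ' := sup_le_sup_right hstep _
              _ = DF (b :: F) ⊔ NQ' := by rw [sup_assoc, sup_idem]; rfl
        -- minimal finite intersection
        have hDFcons : ∀ (b : A) (F : List A),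
            DF (b :: F) = genEig (T b) (f b) ⊓ DF F := fun b F => rfl
        have claim2 : ∃ F : List A, DF F ≤ E := by
          have hSne : (Set.range (fun F : List A => Module.finrank K ↥(DF F))).Nonempty :=
            ⟨_, ⟨[], rfl⟩⟩
          obtain ⟨F₀, hF₀⟩ := Nat.sInf_mem hSne
          simp only at hF₀
          refine ⟨F₀, ?_⟩
          rw [hE]
          refine le_iInf fun b => ?_
          by_contra hb
          have hlt : DF (b :: F₀) < DF F₀ := by
            rw [hDFcons]
            refine lt_of_le_of_ne inf_le_right ?_
            intro he
            exact hb (inf_eq_right.mp he)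
          have hclt : Module.finrank K ↥(DF (b :: F₀)) < Module.finrank K ↥(DF F₀) :=
            Submodule.finrank_lt_finrank_of_lt hlt
          have hmin : sInf (Set.range (fun F : List A => Module.finrank K ↥(DF F)))
              ≤ Module.finrank K ↥(DF (b :: F₀)) := Nat.sInf_le ⟨b :: F₀, rfl⟩
          omega
        obtain ⟨F₀, hF₀⟩ := claim2
        have hkey : NQ ≤ (NQ ⊓ E) ⊔ NQ' :=
          (claim1 F₀).trans (sup_le_sup_right (le_inf (hDFle F₀) hF₀) _)
        -- dimension bookkeeping
        have hA : (NQ ⊓ E) ⊔ NQ' = NQ :=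
          le_antisymm (sup_le inf_le_left hNQ'le) hkey
        have hB : (NQ ⊓ E) ⊓ NQ' = NQ' ⊓ E := by
          rw [inf_assoc, inf_comm E NQ', ← inf_assoc, inf_eq_right.mpr hNQ'le]
        have hdimeq := Submodule.finrank_sup_add_finrank_inf_eq (NQ ⊓ E) NQ'
        rw [hA, hB] at hdimeq
        have ihQ' := ih Q' hQ'ss hQ'P hQ'cl
        rw [← hNQ'] at ihQ'
        have hQrank : Module.finrank K ↥NQ = ∑ q ∈ Q, Module.finrank K ↥(U q) := by
          rw [hNQ]; exact hrank Q hQP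
        have hQ'rank : Module.finrank K ↥NQ' = ∑ q ∈ Q', Module.finrank K ↥(U q) := by
          rw [hNQ']; exact hrank Q' hQ'P
        have hsum : ∑ q ∈ Q', Module.finrank K ↥(U q) + Module.finrank K ↥(U p)
            = ∑ q ∈ Q, Module.finrank K ↥(U q) := Finset.sum_erase_add _ _ hpQ
        have hpfil : p ∈ Q.filter (fun q => c q = f) := Finset.mem_filter.mpr ⟨hpQ, hcf⟩
        have hfil : Q'.filter (fun q => c q = f) = (Q.filter (fun q => c q = f)).erase p := by
          rw [hQ', Finset.filter_erase]
        have hsumf : ∑ q ∈ Q'.filter (fun q => c q = f), Module.finrank K ↥(U q)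
            + Module.finrank K ↥(U p)
            = ∑ q ∈ Q.filter (fun q => c q = f), Module.finrank K ↥(U q) := by
          rw [hfil]
          exact Finset.sum_erase_add _ _ hpfil
        omega
      · -- p does not contribute
        obtain ⟨a, ha⟩ : ∃ a, c p a ≠ f a := by
          by_contra h
          push_neg at h
          exact hcf (funext h)
        have hNQ'inv : ∀ x ∈ NQ', T a x ∈ NQ' := hinv Q' hQ'P hQ'cl a
        have hle : NQ ⊓ E ≤ NQ' := by
          rintro v ⟨hvN, hvE⟩
          have hmapQ : NQ' ≤ Submodule.comap (T a) NQ' := fun x hx => hNQ'inv x hx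
          set π := NQ'.mkQ with hπ
          set g := Submodule.mapQ NQ' NQ' (T a) hmapQ with hg
          have hcommg : ∀ x, g (π x) = π (T a x) := fun x => by
            rw [hg, hπ, Submodule.mkQ_apply, Submodule.mapQ_apply, Submodule.mkQ_apply]
          have heig : g (π v) = c p a • π v := by
            have h0 : π (T a v - c p a • v) = 0 := by
              rw [Submodule.mkQ_apply, Submodule.Quotient.mk_eq_zero]
              exact htriQ a v hvN
            have h1 : π (T a v) - c p a • π v = 0 := by
              rw [← map_smul, ← map_sub]; exact h0
            rw [hcommg, ← sub_eq_zero]; exact h1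
          obtain ⟨n, hn⟩ := mem_genEig.mp ((Submodule.mem_iInf _).mp hvE a)
          have hπpow : ∀ m : ℕ, ∀ x : M,
              ((g - f a • (1 : Module.End K (M ⧸ NQ'))) ^ m) (π x)
              = π (((T a - f a • (1 : Module.End K M)) ^ m) x) := by
            intro m
            induction m with
            | zero => intro x; simp
            | succ m ihm =>
              intro x
              rw [pow_succ, pow_succ]
              simp only [Module.End.mul_apply]
              have : (g - f a • (1 : Module.End K (M ⧸ NQ'))) (π x)
                  = π ((T a - f a • (1 : Module.End K M)) x) := by
                simp only [LinearMap.sub_apply, LinearMap.smul_apply, Module.End.one_apply]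
                rw [hcommg, map_sub, map_smul]
              rw [this, ihm]
          have hev : ∀ m : ℕ, ((g - f a • (1 : Module.End K (M ⧸ NQ'))) ^ m) (π v)
              = (c p a - f a) ^ m • π v := by
            intro m
            induction m with
            | zero => simp
            | succ m ihm =>
              have h1 : (g - f a • (1 : Module.End K (M ⧸ NQ'))) (π v)
                  = (c p a - f a) • π v := by
                rw [LinearMap.sub_apply, LinearMap.smul_apply, Module.End.one_apply, heig,
                  ← sub_smul]
              rw [pow_succ', Module.End.mul_apply, ihm, map_smul, h1, smul_smul, ← pow_succ]
          have h2 : (c p a - f a) ^ n • π v = 0 := by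
            rw [← hev n, hπpow n v, hn, map_zero]
          have h3 : π v = 0 := by
            have hnz : (c p a - f a) ^ n ≠ 0 := pow_ne_zero _ (sub_ne_zero.mpr ha)
            exact (smul_eq_zero.mp h2).resolve_left hnz
          rwa [hπ, Submodule.mkQ_apply, Submodule.Quotient.mk_eq_zero] at h3
        have hEq : NQ ⊓ E = NQ' ⊓ E :=
          le_antisymm (le_inf hle inf_le_right) (inf_le_inf_right E hNQ'le)
        have ihQ' := ih Q' hQ'ss hQ'P hQ'cl
        rw [← hNQ'] at ihQ'
        rw [hEq, ihQ']
        have hfil : Q'.filter (fun q => c q = f) = Q.filter (fun q => c q = f) := by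
          rw [hQ', Finset.filter_erase, Finset.erase_eq_of_notMem]
          simp [hcf]
        rw [hfil]
  have := key P le_rfl (fun q _ q' hq' _ => hq')
  rwa [htop, top_inf_eq] at this

end Core
set_option maxHeartbeats 2000000 in
theorem q_characters_multiplicative
    {K : Type*} [Field K] {I : Type*}
    [DecidableEq (I → (PowerSeries K)ˣ)]
    {V W : Type*} [AddCommGroup V] [Module K V] [AddCommGroup W] [Module K W]
    (SV SW : Finset (I → (PowerSeries K)ˣ))
    (Vsub : (I → (PowerSeries K)ˣ) → Submodule K V)
    (Wsub : (I → (PowerSeries K)ˣ) → Submodule K W)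
    (hVint : DirectSum.IsInternal (fun ψ : SV => Vsub ↑ψ))
    (hWint : DirectSum.IsInternal (fun ψ : SW => Wsub ↑ψ))
    [∀ ψ, FiniteDimensional K (Vsub ψ)] [∀ ψ, FiniteDimensional K (Wsub ψ)]
    -- the commuting family of operators φ⁺_{i,d} on V ⊗ W
    (T : I → ℕ → Module.End K (V ⊗[K] W))
    (hcomm : ∀ i d i' d', Commute (T i d) (T i' d'))
    -- a strict partial order on loop weights (λγⁿ > λ)
    (r : (I → (PowerSeries K)ˣ) → (I → (PowerSeries K)ˣ) → Prop)
    (htrans : Transitive r) (hirr : Irreflexive r)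
    -- block upper-triangularity with diagonal blocks acting via (ψψ')_{i,d}
    (htri : ∀ ψ ∈ SV, ∀ ψ' ∈ SW, ∀ (i : I) (d : ℕ),
      ∀ x ∈ LinearMap.range
          (TensorProduct.map (Vsub ψ).subtype (Wsub ψ').subtype),
        T i d x - (PowerSeries.coeff d ((ψ i * ψ' i : (PowerSeries K)ˣ) : PowerSeries K)) • x
          ∈ ⨆ (μ ∈ SV) (μ' ∈ SW) (_ : r (μ * μ') (ψ * ψ')),
              LinearMap.range
                (TensorProduct.map (Vsub μ).subtype (Wsub μ').subtype)) :
    ∀ χ : I → (PowerSeries K)ˣ,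
      Module.finrank K
          ↥(⨅ (i : I) (d : ℕ),
            genEig (T i d) (PowerSeries.coeff d ((χ i : PowerSeries K))))
        = ∑ q ∈ (SV ×ˢ SW).filter (fun q => q.1 * q.2 = χ),
            Module.finrank K ↥(Vsub q.1) * Module.finrank K ↥(Wsub q.2) := by
  intro χ
  haveI : DecidableEq ((I × ℕ) → K) := Classical.decEq _
  have hVtop : (⨆ ψ : SV, Vsub ↑ψ) = ⊤ := hVint.submodule_iSup_eq_top
  have hWtop : (⨆ ψ : SW, Wsub ↑ψ) = ⊤ := hWint.submodule_iSup_eq_top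
  haveI hfV : FiniteDimensional K V := by
    have h1 : FiniteDimensional K ↥(⨆ ψ : SV, Vsub ↑ψ) := inferInstance
    rw [hVtop] at h1
    exact Module.Finite.equiv (Submodule.topEquiv)
  haveI hfW : FiniteDimensional K W := by
    have h1 : FiniteDimensional K ↥(⨆ ψ : SW, Wsub ↑ψ) := inferInstance
    rw [hWtop] at h1
    exact Module.Finite.equiv (Submodule.topEquiv)
  have hVrank : Module.finrank K V = ∑ ψ ∈ SV, Module.finrank K ↥(Vsub ψ) := by
    have e := LinearEquiv.ofBijective (DirectSum.coeLinearMap fun ψ : SV => Vsub ↑ψ) hVint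
    rw [← e.finrank_eq, Module.finrank_directSum, Finset.sum_coe_sort SV
      (fun ψ => Module.finrank K ↥(Vsub ψ))]
  have hWrank : Module.finrank K W = ∑ ψ ∈ SW, Module.finrank K ↥(Wsub ψ) := by
    have e := LinearEquiv.ofBijective (DirectSum.coeLinearMap fun ψ : SW => Wsub ↑ψ) hWint
    rw [← e.finrank_eq, Module.finrank_directSum, Finset.sum_coe_sort SW
      (fun ψ => Module.finrank K ↥(Wsub ψ))]
  -- the family of blocks
  set U : ((I → (PowerSeries K)ˣ) × (I → (PowerSeries K)ˣ)) → Submodule K (V ⊗[K] W) :=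
    fun q => LinearMap.range (TensorProduct.map (Vsub q.1).subtype (Wsub q.2).subtype) with hU
  have hinj : ∀ (p : Submodule K V) (q : Submodule K W),
      Function.Injective (TensorProduct.map p.subtype q.subtype) := by
    intro p q
    have h1 : (LinearMap.rTensor W p.subtype).comp (LinearMap.lTensor ↥p q.subtype)
        = TensorProduct.map p.subtype q.subtype := by
      rw [LinearMap.rTensor, LinearMap.lTensor, ← TensorProduct.map_comp,
        LinearMap.comp_id, LinearMap.id_comp]
    rw [← h1]
    exact (Module.Flat.rTensor_preserves_injective_linearMap _ p.injective_subtype).comp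
      (Module.Flat.lTensor_preserves_injective_linearMap _ q.injective_subtype)
  have hUdim : ∀ ψ ψ', Module.finrank K ↥(U (ψ, ψ'))
      = Module.finrank K ↥(Vsub ψ) * Module.finrank K ↥(Wsub ψ') := by
    intro ψ ψ'
    rw [hU]
    rw [LinearMap.finrank_range_of_inj (hinj _ _), Module.finrank_tensorProduct]
  have htopVW : (⨆ q ∈ SV ×ˢ SW, U q) = ⊤ := by
    rw [eq_top_iff, ← TensorProduct.span_tmul_eq_top, Submodule.span_le]
    rintro x ⟨v, w, rfl⟩
    have hv : v ∈ ⨆ ψ : SV, Vsub ↑ψ := by rw [hVtop]; exact Submodule.mem_top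
    refine Submodule.iSup_induction (motive := fun v => v ⊗ₜ[K] w ∈ ⨆ q ∈ SV ×ˢ SW, U q)
      (fun ψ : SV => Vsub ↑ψ) hv (fun ψ v hvψ => ?_) ?_ ?_
    · have hw : w ∈ ⨆ ψ' : SW, Wsub ↑ψ' := by rw [hWtop]; exact Submodule.mem_top
      refine Submodule.iSup_induction (motive := fun w => v ⊗ₜ[K] w ∈ ⨆ q ∈ SV ×ˢ SW, U q)
        (fun ψ' : SW => Wsub ↑ψ') hw (fun ψ' w hwψ' => ?_) ?_ ?_
      · have hmem : v ⊗ₜ[K] w ∈ U (↑ψ, ↑ψ') :=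
          ⟨(⟨v, hvψ⟩ : ↥(Vsub ↑ψ)) ⊗ₜ[K] (⟨w, hwψ'⟩ : ↥(Wsub ↑ψ')), by simp [hU]⟩
        exact le_iSup₂ (f := fun q (_ : q ∈ SV ×ˢ SW) => U q) ((↑ψ : _), (↑ψ' : _))
          (Finset.mem_product.mpr ⟨ψ.2, ψ'.2⟩) hmem
      · show v ⊗ₜ[K] (0 : W) ∈ ⨆ q ∈ SV ×ˢ SW, U q
        rw [TensorProduct.tmul_zero]; exact Submodule.zero_mem _
      · intro w₁ w₂ h₁ h₂
        show v ⊗ₜ[K] (w₁ + w₂) ∈ ⨆ q ∈ SV ×ˢ SW, U q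
        rw [TensorProduct.tmul_add]; exact Submodule.add_mem _ h₁ h₂
    · show (0 : V) ⊗ₜ[K] w ∈ ⨆ q ∈ SV ×ˢ SW, U q
      rw [TensorProduct.zero_tmul]; exact Submodule.zero_mem _
    · intro v₁ v₂ h₁ h₂
      show (v₁ + v₂) ⊗ₜ[K] w ∈ ⨆ q ∈ SV ×ˢ SW, U q
      rw [TensorProduct.add_tmul]; exact Submodule.add_mem _ h₁ h₂
  have hdimVW : Module.finrank K (V ⊗[K] W) = ∑ q ∈ SV ×ˢ SW, Module.finrank K ↥(U q) := by
    rw [Finset.sum_product]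
    rw [Module.finrank_tensorProduct, hVrank, hWrank, Finset.sum_mul_sum]
    exact Finset.sum_congr rfl fun ψ _ => Finset.sum_congr rfl fun ψ' _ => (hUdim ψ ψ').symm
  -- triangularity
  have htri' : ∀ p ∈ SV ×ˢ SW, ∀ (a : I × ℕ), ∀ x ∈ U p,
      T a.1 a.2 x
        - (PowerSeries.coeff a.2 ((p.1 a.1 * p.2 a.1 : (PowerSeries K)ˣ) : PowerSeries K)) • x
        ∈ ⨆ q ∈ SV ×ˢ SW,
            ⨆ _ : r (q.1 * q.2) (p.1 * p.2), U q := by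
    rintro ⟨ψ, ψ'⟩ hp ⟨i, d⟩ x hx
    obtain ⟨hψ, hψ'⟩ := Finset.mem_product.mp hp
    have h1 := htri ψ hψ ψ' hψ' i d x hx
    refine SetLike.le_def.mp ?_ h1
    refine iSup₂_le fun μ hμ => iSup₂_le fun μ' hμ' => iSup_le fun hr => ?_
    exact le_iSup_of_le (μ, μ')
      (le_iSup_of_le (Finset.mem_product.mpr ⟨hμ, hμ'⟩) (le_iSup_of_le hr le_rfl))
  have hmain := core (fun a : I × ℕ => T a.1 a.2)
    (fun a b => hcomm a.1 a.2 b.1 b.2)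
    (fun q q' : ((I → (PowerSeries K)ˣ) × (I → (PowerSeries K)ˣ)) => r (q.1 * q.2) (q'.1 * q'.2))
    (fun _ _ _ hab hbc => htrans hab hbc) (fun _ h => hirr _ h)
    (fun q (a : I × ℕ) =>
      PowerSeries.coeff a.2 ((q.1 a.1 * q.2 a.1 : (PowerSeries K)ˣ) : PowerSeries K))
    U
    (fun a : I × ℕ => PowerSeries.coeff a.2 ((χ a.1 : PowerSeries K)))
    (SV ×ˢ SW) htopVW hdimVW htri'
  have hiInf : (⨅ (i : I) (d : ℕ),
        genEig (T i d) (PowerSeries.coeff d ((χ i : PowerSeries K))))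
      = ⨅ a : I × ℕ, genEig (T a.1 a.2) (PowerSeries.coeff a.2 ((χ a.1 : PowerSeries K))) := by
    apply le_antisymm
    · exact le_iInf fun a => iInf_le_of_le a.1 (iInf_le _ a.2)
    · exact le_iInf fun i => le_iInf fun d => iInf_le _ (i, d)
  rw [hiInf, hmain]
  have hfilter : (SV ×ˢ SW).filter (fun q =>
        (fun a : I × ℕ =>
          PowerSeries.coeff a.2 ((q.1 a.1 * q.2 a.1 : (PowerSeries K)ˣ) : PowerSeries K))
        = fun a : I × ℕ => PowerSeries.coeff a.2 ((χ a.1 : PowerSeries K)))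
      = (SV ×ˢ SW).filter (fun q => q.1 * q.2 = χ) := by
    refine Finset.filter_congr fun q _ => ?_
    constructor
    · intro h
      funext i
      refine Units.ext ?_
      refine PowerSeries.ext fun d => ?_
      have h2 := congrFun h (i, d)
      simpa using h2
    · intro h
      funext a
      have h2 : q.1 a.1 * q.2 a.1 = χ a.1 := by rw [← h]; rfl
      rw [h2]
  rw [hfilter]
  exact Finset.sum_congr rfl fun q _ => hUdim q.1 q.2
end

section
/- Let A be an algebra graded by ℤ^I × ℤ. Define A ⊗̂^H A as the space of (possibly infinite) sums Σ_k x_k ⊗ y_k of homogeneous tensors of fixed total degree such that, for every N ∈ ℕ, all but finitely many summands satisfy |hdeg x_k| ≤ −N and |hdeg y_k| ≥ N (where |n| = Σ_i n_i for n ∈ ℤ^I). Then A ⊗̂^H A is closed under the multiplication induced by (x ⊗ y)(x' ⊗ y') = xx' ⊗ yy': the product of two elements of A ⊗̂^H A is a well-defined element of A ⊗̂^H A. -/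
/-!
STATEMENT 19: Let `A` be an algebra graded by `ℤ^I × ℤ` (graded pieces
`𝒜 (n,d)` with `𝒜 n · 𝒜 m ⊆ 𝒜 (n+m)`).  An element of `A ⊗̂^H A` is a possibly
infinite sum `Σ_k x_k ⊗ y_k` of homogeneous tensors such that for every `N`,
all but finitely many summands satisfy `|hdeg x_k| ≤ −N` and `|hdeg y_k| ≥ N`
(with `|n| = Σᵢ nᵢ`).  The product of two such elements, given by the doubly
indexed family `(k,l) ↦ (x_k x'_l) ⊗ (y_k y'_l)`, is again a well-defined
element of `A ⊗̂^H A`: its summands are homogeneous of the expected degrees and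
the family again satisfies the admissibility condition for every `N`.
-/


private lemma exists_lower_bound_of_finite (f : ℕ → ℤ)
    (h : {k : ℕ | f k < 0}.Finite) : ∃ B : ℤ, ∀ k, B ≤ f k := by
  classical
  by_cases he : h.toFinset.Nonempty
  · refine ⟨min 0 ((h.toFinset.image f).min' (he.image f)), fun k => ?_⟩
    by_cases hk : f k < 0
    · exact le_trans (min_le_right _ _)
        (Finset.min'_le _ _ (Finset.mem_image_of_mem f (by simpa using hk)))
    · exact le_trans (min_le_left _ _) (not_lt.1 hk)
  · exact ⟨0, fun k => not_lt.1 fun hk => he ⟨k, by simpa using hk⟩⟩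

theorem completed_horizontal_tensor_closed_under_multiplication
    {K : Type*} [Field K] {I : Type*} [Fintype I]
    {A : Type*} [Ring A] [Algebra K A]
    (𝒜 : (I → ℤ) × ℤ → Submodule K A)
    (hmul : ∀ (d d' : (I → ℤ) × ℤ) (u u' : A),
      u ∈ 𝒜 d → u' ∈ 𝒜 d' → u * u' ∈ 𝒜 (d + d'))
    -- two elements Σ_k x_k ⊗ y_k and Σ_l x'_l ⊗ y'_l of A ⊗̂^H A
    (x y x' y' : ℕ → A) (dx dy dx' dy' : ℕ → (I → ℤ) × ℤ)
    (hx : ∀ k, x k ∈ 𝒜 (dx k)) (hy : ∀ k, y k ∈ 𝒜 (dy k))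
    (hx' : ∀ l, x' l ∈ 𝒜 (dx' l)) (hy' : ∀ l, y' l ∈ 𝒜 (dy' l))
    (hadm : ∀ N : ℤ,
      {k : ℕ | ¬ ((∑ i, (dx k).1 i) ≤ -N ∧ N ≤ ∑ i, (dy k).1 i)}.Finite)
    (hadm' : ∀ N : ℤ,
      {l : ℕ | ¬ ((∑ i, (dx' l).1 i) ≤ -N ∧ N ≤ ∑ i, (dy' l).1 i)}.Finite) :
    -- the product family (k,l) ↦ (x_k x'_l) ⊗ (y_k y'_l) consists of homogeneous
    -- tensors of the expected degrees …
    (∀ kl : ℕ × ℕ,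
      x kl.1 * x' kl.2 ∈ 𝒜 (dx kl.1 + dx' kl.2)
        ∧ y kl.1 * y' kl.2 ∈ 𝒜 (dy kl.1 + dy' kl.2))
    -- … and again satisfies the ⊗̂^H admissibility condition
    ∧ (∀ N : ℤ,
      {kl : ℕ × ℕ |
        ¬ ((∑ i, (dx kl.1 + dx' kl.2).1 i) ≤ -N
            ∧ N ≤ ∑ i, (dy kl.1 + dy' kl.2).1 i)}.Finite) := by
  classical
  refine ⟨fun kl => ⟨hmul _ _ _ _ (hx _) (hx' _), hmul _ _ _ _ (hy _) (hy' _)⟩, ?_⟩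
  intro N
  set a : ℕ → ℤ := fun k => min (-(∑ i, (dx k).1 i)) (∑ i, (dy k).1 i) with ha_def
  set b : ℕ → ℤ := fun l => min (-(∑ i, (dx' l).1 i)) (∑ i, (dy' l).1 i) with hb_def
  have ha : ∀ M : ℤ, {k : ℕ | a k < M}.Finite := by
    intro M
    refine (hadm M).subset ?_
    intro k hk
    simp only [Set.mem_setOf_eq, ha_def, min_lt_iff] at hk ⊢
    omega
  have hb : ∀ M : ℤ, {l : ℕ | b l < M}.Finite := by
    intro M
    refine (hadm' M).subset ?_
    intro l hl
    simp only [Set.mem_setOf_eq, hb_def, min_lt_iff] at hl ⊢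
    omega
  obtain ⟨A0, hA0⟩ := exists_lower_bound_of_finite a (ha 0)
  obtain ⟨B0, hB0⟩ := exists_lower_bound_of_finite b (hb 0)
  refine ((ha (N - B0)).prod (hb (N - A0))).subset ?_
  rintro ⟨k, l⟩ hkl
  simp only [Set.mem_setOf_eq] at hkl
  have hxs : (∑ i, (dx k + dx' l).1 i)
      = (∑ i, (dx k).1 i) + ∑ i, (dx' l).1 i := by
    rw [← Finset.sum_add_distrib]; rfl
  have hys : (∑ i, (dy k + dy' l).1 i)
      = (∑ i, (dy k).1 i) + ∑ i, (dy' l).1 i := by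
    rw [← Finset.sum_add_distrib]; rfl
  rw [hxs, hys] at hkl
  have hAk := le_min_iff.mp (hA0 k)
  have hBl := le_min_iff.mp (hB0 l)
  constructor <;> simp only [Set.mem_setOf_eq, ha_def, hb_def, min_lt_iff] <;> omega
end
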